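/- Let E be a real separable Banach space and ζ a finite signed Borel measure on E. Then the total variation of ζ satisfies |ζ|(E) = sup{∫_E g dζ : g ∈ 𝓕C_b¹, ‖g‖_∞ ≤ 1}. -/

import Mathlib

open MeasureTheory Filter
open scoped RealInnerProductSpace ENNReal

noncomputable section

/-- The class `𝓕C_b¹` of `C¹` cylinder functions
`u z = f (l₁ z, …, l_m z)` with `f ∈ C_b¹(ℝ^m)`. -/
def FCb1 (E : Type*) [NormedAddCommGroup E] [NormedSpace ℝ E] : Set (E → ℝ) :=
  {u | ∃ (m : ℕ) (l : Fin m → (E →L[ℝ] ℝ)) (f : (Fin m → ℝ) → ℝ),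
      ContDiff ℝ 1 f ∧ (∃ C, ∀ x, |f x| ≤ C) ∧ (∃ C, ∀ x, ‖fderiv ℝ f x‖ ≤ C) ∧
      ∀ z, u z = f fun i => l i z}

/-- Directional derivative `∂u/∂v (z) = (d/ds) u (z + s v) |_{s = 0}`. -/
def dirDeriv {E : Type*} [NormedAddCommGroup E] [NormedSpace ℝ E]
    (u : E → ℝ) (v : E) (z : E) : ℝ :=
  deriv (fun s : ℝ => u (z + s • v)) 0

/-- `β` is (a version of) the logarithmic derivative of `μ` along `v`, i.e. `μ` is
Fomin-differentiable along `v` with `d_v μ = β ⬝ μ` (a finite signed measure `≪ μ`). -/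
def IsLogDeriv {E : Type*} [NormedAddCommGroup E] [NormedSpace ℝ E] [MeasurableSpace E]
    (μ : Measure E) (v : E) (β : E → ℝ) : Prop :=
  Integrable β μ ∧ ∀ φ ∈ FCb1 E, ∫ z, dirDeriv φ v z ∂μ = -∫ z, φ z * β z ∂μ

/-- `v ∈ H(μ)` : `μ` is Fomin-differentiable along `v` with square-integrable
logarithmic derivative. -/
def MemHmu {E : Type*} [NormedAddCommGroup E] [NormedSpace ℝ E] [MeasurableSpace E]
    (μ : Measure E) (v : E) : Prop :=
  ∃ β : E → ℝ, IsLogDeriv μ v β ∧ MemLp β 2 μ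

/-- Hypothesis 2.2: `Q` is a bounded symmetric nonnegative operator on `H` with nonnegative
symmetric square root `sqrtQ`, `Q^{1/2}(H) ⊆ H(μ)` (with chosen logarithmic derivatives
`β h ∈ L²(μ)` for `h ∈ Q^{1/2}(H)`), and there is an orthonormal basis `e : ℕ → H` of `H`
consisting of elements of `E*` which are eigenvectors of `Q` with eigenvalues `lam j > 0`.
Here `ι : H →L[ℝ] E` is the embedding of `H` into `E`. -/
structure Hyp22 {E H : Type*} [NormedAddCommGroup E] [NormedSpace ℝ E] [MeasurableSpace E]
    [NormedAddCommGroup H] [InnerProductSpace ℝ H]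
    (μ : Measure E) (ι : H →L[ℝ] E) (Q sqrtQ : H →L[ℝ] H)
    (e : ℕ → H) (lam : ℕ → ℝ) (β : H → E → ℝ) : Prop where
  Q_symm : ∀ x y : H, ⟪Q x, y⟫ = ⟪x, Q y⟫
  Q_nonneg : ∀ x : H, 0 ≤ ⟪Q x, x⟫
  sqrtQ_symm : ∀ x y : H, ⟪sqrtQ x, y⟫ = ⟪x, sqrtQ y⟫
  sqrtQ_nonneg : ∀ x : H, 0 ≤ ⟪sqrtQ x, x⟫
  sqrtQ_sq : ∀ x : H, sqrtQ (sqrtQ x) = Q x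
  ortho : Orthonormal ℝ e
  total : (Submodule.span ℝ (Set.range e)).topologicalClosure = ⊤
  basis_in_dual : ∀ j : ℕ, ∃ l : E →L[ℝ] ℝ, ∀ h : H, ⟪e j, h⟫ = l (ι h)
  lam_pos : ∀ j, 0 < lam j
  eigen : ∀ j, Q (e j) = lam j • e j
  logDeriv : ∀ h ∈ Set.range sqrtQ, IsLogDeriv μ (ι h) (β h)
  logDeriv_L2 : ∀ h ∈ Set.range sqrtQ, MemLp (β h) 2 μ

/-- `x ∈ H₁`, where `H₁ = {x ∈ H : ∑ c_j² ⟨x,e_j⟩² < ∞}`. -/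
def memH1 {H : Type*} [NormedAddCommGroup H] [InnerProductSpace ℝ H]
    (c : ℕ → ℝ) (e : ℕ → H) (x : H) : Prop :=
  Summable fun j => (c j) ^ 2 * ⟪x, e j⟫ ^ 2

/-- The square of the `H₁`-norm, `‖x‖_{H₁}² = ∑ c_j² ⟨x,e_j⟩²`. -/
def normH1sq {H : Type*} [NormedAddCommGroup H] [InnerProductSpace ℝ H]
    (c : ℕ → ℝ) (e : ℕ → H) (x : H) : ℝ :=
  ∑' j, (c j) ^ 2 * ⟪x, e j⟫ ^ 2

/-- The `H₁`-inner product `⟨x,y⟩_{H₁} = ∑ c_j² ⟨x,e_j⟩⟨y,e_j⟩`. -/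
def innerH1 {H : Type*} [NormedAddCommGroup H] [InnerProductSpace ℝ H]
    (c : ℕ → ℝ) (e : ℕ → H) (x y : H) : ℝ :=
  ∑' j, (c j) ^ 2 * (⟪x, e j⟫ * ⟪y, e j⟫)

/-- The squared `H₁*`-norm of an element of `H₁*` given by its coefficients `b j`
with respect to the orthonormal basis `{c_j e_j}` of `H₁*`. -/
def normH1starSq (b : ℕ → ℝ) : ℝ := ∑' j, (b j) ^ 2

/-- The dual pairing `_{H₁}⟨x, σ⟩_{H₁*}` of `x ∈ H₁` with the element `σ ∈ H₁*` whose
coefficients with respect to the orthonormal basis `{c_j e_j}` of `H₁*` are `b j`;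
since the pairing extends the inner product of `H`, it equals `∑ b_j c_j ⟨x, e_j⟩`. -/
def pairH1 {H : Type*} [NormedAddCommGroup H] [InnerProductSpace ℝ H]
    (c : ℕ → ℝ) (e : ℕ → H) (x : H) (b : ℕ → ℝ) : ℝ :=
  ∑' j, b j * (c j * ⟪x, e j⟫)

/-- `ψ` is a version of `D*G` for the vector field `G z = ∑ j, g j z • lv j`, i.e.
`∫ ψ f dμ = ∫ ⟨G, Df⟩ dμ` for all `f ∈ 𝓕C_b¹` (note `⟨G z, Df z⟩ = ∑ j g_j(z) ∂f/∂(lv j)(z)`). -/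
def IsDstar {E H : Type*} [NormedAddCommGroup E] [NormedSpace ℝ E] [MeasurableSpace E]
    [NormedAddCommGroup H] [InnerProductSpace ℝ H]
    (μ : Measure E) (ι : H →L[ℝ] E) {m : ℕ}
    (g : Fin m → E → ℝ) (lv : Fin m → H) (ψ : E → ℝ) : Prop :=
  Integrable ψ μ ∧
    ∀ f ∈ FCb1 E, ∫ z, ψ z * f z ∂μ = ∫ z, ∑ j, g j z * dirDeriv f (ι (lv j)) z ∂μ

/-- The set of numbers `∫ D*G ρ dμ` over test vector fields
`G ∈ (𝓕C_b¹)_{Q^{1/2}(H)∩H₁}` with `‖G(z)‖_{H₁} ≤ 1` for all `z`. -/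
def Vset {E H : Type*} [NormedAddCommGroup E] [NormedSpace ℝ E] [MeasurableSpace E]
    [NormedAddCommGroup H] [InnerProductSpace ℝ H]
    (μ : Measure E) (ι : H →L[ℝ] E) (sqrtQ : H →L[ℝ] H) (c : ℕ → ℝ) (e : ℕ → H)
    (ρ : E → ℝ) : Set ℝ :=
  {r | ∃ (m : ℕ) (g : Fin m → E → ℝ) (lv : Fin m → H) (ψ : E → ℝ),
      (∀ j, g j ∈ FCb1 E) ∧ (∀ j, lv j ∈ Set.range sqrtQ) ∧ (∀ j, memH1 c e (lv j)) ∧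
      (∀ z, normH1sq c e (∑ j, g j z • lv j) ≤ 1) ∧
      IsDstar μ ι g lv ψ ∧ r = ∫ z, ψ z * ρ z ∂μ}

/-- `V(ρ)`, the total variation of `ρ`. -/
def Vtotal {E H : Type*} [NormedAddCommGroup E] [NormedSpace ℝ E] [MeasurableSpace E]
    [NormedAddCommGroup H] [InnerProductSpace ℝ H]
    (μ : Measure E) (ι : H →L[ℝ] E) (sqrtQ : H →L[ℝ] H) (c : ℕ → ℝ) (e : ℕ → H)
    (ρ : E → ℝ) : ℝ :=
  sSup (Vset μ ι sqrtQ c e ρ)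

/-- `ρ ∈ BV(H, H₁)` : `ρ ∈ L²(E,μ)` and `V(ρ) < ∞`. -/
def IsBV {E H : Type*} [NormedAddCommGroup E] [NormedSpace ℝ E] [MeasurableSpace E]
    [NormedAddCommGroup H] [InnerProductSpace ℝ H]
    (μ : Measure E) (ι : H →L[ℝ] E) (sqrtQ : H →L[ℝ] H) (c : ℕ → ℝ) (e : ℕ → H)
    (ρ : E → ℝ) : Prop :=
  MemLp ρ 2 μ ∧ BddAbove (Vset μ ι sqrtQ c e ρ)

/-- `ρ ∈ BV_l(E)` (with `v ∈ E` the direction corresponding to `l ∈ E*`):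
`|∫ ∂u/∂l ρ dμ| ≤ C ‖u‖_∞` for all `u ∈ 𝓕C_b¹`. -/
def IsBVl {E : Type*} [NormedAddCommGroup E] [NormedSpace ℝ E] [MeasurableSpace E]
    (μ : Measure E) (v : E) (ρ : E → ℝ) : Prop :=
  ∃ C > 0, ∀ u ∈ FCb1 E, ∀ M : ℝ, (∀ z, |u z| ≤ M) →
    |∫ z, dirDeriv u v z * ρ z ∂μ| ≤ C * M

/-- Integral of `f` against a signed measure, via the Jordan decomposition. -/
def sintegral {E : Type*} [MeasurableSpace E] (ν : SignedMeasure E) (f : E → ℝ) : ℝ :=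
  (∫ z, f z ∂ν.toJordanDecomposition.posPart) - ∫ z, f z ∂ν.toJordanDecomposition.negPart

/-- The topological support of a measure. -/
def msupport {E : Type*} [TopologicalSpace E] [MeasurableSpace E] (ν : Measure E) : Set E :=
  {x | ∀ U : Set E, IsOpen U → x ∈ U → 0 < ν U}

/-- The `L²(μ)`-norm. -/
def L2norm {E : Type*} [MeasurableSpace E] (μ : Measure E) (f : E → ℝ) : ℝ :=
  Real.sqrt (∫ z, (f z) ^ 2 ∂μ)



-- ### Auxiliary lemmas for Statement 16 ###

open Topology in
lemma aux_tight {E : Type*} [PseudoMetricSpace E] [Nonempty E] [CompleteSpace E]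
    [SecondCountableTopology E] [MeasurableSpace E] [OpensMeasurableSpace E]
    (μ : Measure E) [IsFiniteMeasure μ] {ε : ℝ≥0∞} (hε : ε ≠ 0) :
    ∃ K : Set E, IsCompact K ∧ μ Kᶜ < ε := by
  obtain ⟨u, hu⟩ := TopologicalSpace.exists_dense_seq E
  obtain ⟨δ, hδpos, hδsum⟩ := ENNReal.exists_pos_sum_of_countable hε ℕ
  set C : ℕ → ℕ → Set E := fun n N => ⋃ k ∈ Finset.range N,
    Metric.closedBall (u k) (1 / (n + 1)) with hC
  have hCclosed : ∀ n N, IsClosed (C n N) := fun n N =>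
    Set.Finite.isClosed_biUnion (Finset.range N).finite_toSet fun k _ => Metric.isClosed_closedBall
  have hCmono : ∀ n, Monotone fun N => (C n N) := by
    intro n N M hNM
    apply Set.biUnion_subset_biUnion_left
    intro k hk
    exact Finset.mem_range.2 (lt_of_lt_of_le (Finset.mem_range.1 hk) hNM)
  have hCunion : ∀ n, ⋃ N, C n N = Set.univ := by
    intro n
    apply Set.eq_univ_of_forall
    intro z
    have : (0 : ℝ) < 1 / (n + 1) := by positivity
    obtain ⟨k, hk⟩ := hu.exists_dist_lt z this
    exact Set.mem_iUnion.2 ⟨k + 1, Set.mem_biUnion (Finset.mem_range.2 (Nat.lt_succ_self k))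
      (Metric.mem_closedBall.2 hk.le)⟩
  have key : ∀ n : ℕ, ∃ N, μ (C n N)ᶜ < δ n := by
    intro n
    have htend : Tendsto (fun N => μ (C n N)ᶜ) atTop (𝓝 (μ (⋂ N, (C n N)ᶜ))) :=
      tendsto_measure_iInter_atTop
        (fun N => ((hCclosed n N).measurableSet.compl).nullMeasurableSet)
        (fun N M hNM => Set.compl_subset_compl.2 (hCmono n hNM))
        ⟨0, measure_ne_top _ _⟩
    have : (⋂ N, (C n N)ᶜ) = ∅ := by
      rw [← Set.compl_iUnion, hCunion n, Set.compl_univ]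
    rw [this, measure_empty] at htend
    have := htend.eventually_lt_const (ENNReal.coe_pos.2 (hδpos n))
    exact this.exists
  choose N hN using key
  refine ⟨⋂ n, C n (N n), ?_, ?_⟩
  · apply TotallyBounded.isCompact_of_isClosed
    · rw [Metric.totallyBounded_iff]
      intro r hr
      obtain ⟨n, hn⟩ := exists_nat_one_div_lt (half_pos hr)
      refine ⟨u '' (Set.Iio (N n)), (Set.finite_Iio _).image _, ?_⟩
      intro z hz
      have hz' : z ∈ C n (N n) := Set.mem_iInter.1 hz n
      obtain ⟨k, hk, hzk⟩ := Set.mem_iUnion₂.1 hz'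
      refine Set.mem_biUnion (Set.mem_image_of_mem u (Finset.mem_range.1 hk)) ?_
      have : dist z (u k) ≤ 1 / (n + 1) := Metric.mem_closedBall.1 hzk
      exact Metric.mem_ball.2 (lt_of_le_of_lt this (hn.trans (half_lt_self hr)))
    · exact isClosed_iInter fun n => hCclosed n (N n)
  · calc μ (⋂ n, C n (N n))ᶜ = μ (⋃ n, (C n (N n))ᶜ) := by rw [Set.compl_iInter]
      _ ≤ ∑' n, μ (C n (N n))ᶜ := measure_iUnion_le _
      _ ≤ ∑' n, (δ n : ℝ≥0∞) := ENNReal.tsum_le_tsum fun n => (hN n).le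
      _ < ε := hδsum

/-- Smooth cutoff: `-1` for `t ≤ -1/2`, `1` for `t ≥ 1/2`, values in `[-1,1]`. -/
noncomputable def auxChi (t : ℝ) : ℝ := 2 * Real.smoothTransition (t + 2⁻¹) - 1

lemma auxChi_contDiff : ContDiff ℝ 1 auxChi :=
  (contDiff_const.mul (Real.smoothTransition.contDiff.comp
    (contDiff_id.add contDiff_const))).sub contDiff_const

lemma auxChi_abs_le (t : ℝ) : |auxChi t| ≤ 1 := by
  have h1 := Real.smoothTransition.nonneg (t + 2⁻¹)
  have h2 := Real.smoothTransition.le_one (t + 2⁻¹)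
  rw [abs_le]; constructor <;> simp [auxChi] <;> nlinarith

lemma auxChi_eq_one {t : ℝ} (ht : 2⁻¹ ≤ t) : auxChi t = 1 := by
  rw [auxChi, Real.smoothTransition.one_of_one_le (by linarith)]; ring

lemma auxChi_eq_neg_one {t : ℝ} (ht : t ≤ -2⁻¹) : auxChi t = -1 := by
  rw [auxChi, Real.smoothTransition.zero_of_nonpos (by linarith)]; ring

lemma aux_deriv_st_bound : ∃ C : ℝ, 0 ≤ C ∧
    ∀ s : ℝ, |deriv Real.smoothTransition s| ≤ C := by
  have hc : Continuous (deriv Real.smoothTransition) :=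
    (Real.smoothTransition.contDiff (n := 1)).continuous_deriv le_rfl
  obtain ⟨C, hC⟩ := isCompact_Icc.exists_bound_of_continuousOn
    (s := Set.Icc (0:ℝ) 1) hc.continuousOn
  refine ⟨max C 0, le_max_right _ _, fun s => ?_⟩
  by_cases hs : s ∈ Set.Icc (0:ℝ) 1
  · exact le_trans (by simpa [Real.norm_eq_abs] using hC s hs) (le_max_left _ _)
  · have hzero : deriv Real.smoothTransition s = 0 := by
      rw [Set.mem_Icc, not_and_or, not_le, not_le] at hs
      rcases hs with h | h
      · have heq : Real.smoothTransition =ᶠ[nhds s] fun _ => 0 :=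
          Filter.eventuallyEq_of_mem (Iio_mem_nhds h)
            (fun x hx => Real.smoothTransition.zero_of_nonpos (le_of_lt hx))
        rw [heq.deriv_eq, deriv_const]
      · have heq : Real.smoothTransition =ᶠ[nhds s] fun _ => 1 :=
          Filter.eventuallyEq_of_mem (Ioi_mem_nhds h)
            (fun x hx => Real.smoothTransition.one_of_one_le (le_of_lt hx))
        rw [heq.deriv_eq, deriv_const]
    simp [hzero]

lemma auxFCb1_const {E : Type*} [NormedAddCommGroup E] [NormedSpace ℝ E] (c : ℝ) :
    (fun _ : E => c) ∈ FCb1 E :=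
  ⟨0, fun _ => 0, fun _ => c, contDiff_const, ⟨|c|, fun _ => le_refl _⟩,
   ⟨0, fun x => by simp⟩, fun _ => rfl⟩

/-- Arctan coordinates map, with derivative bound. -/
lemma aux_arctan_pi {m : ℕ} (x : Fin m → ℝ) :
    HasFDerivAt (fun y (i : Fin m) => Real.arctan (y i))
      (ContinuousLinearMap.pi fun i => (1 / (1 + (x i) ^ 2)) •
        (ContinuousLinearMap.proj i : (Fin m → ℝ) →L[ℝ] ℝ)) x :=
  hasFDerivAt_pi.2 fun i =>
    (Real.hasDerivAt_arctan (x i)).comp_hasFDerivAt (f := fun y : Fin m → ℝ => y i) x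
      (ContinuousLinearMap.proj i : (Fin m → ℝ) →L[ℝ] ℝ).hasFDerivAt

lemma aux_arctan_pi_norm {m : ℕ} (x : Fin m → ℝ) :
    ‖(ContinuousLinearMap.pi fun i => (1 / (1 + (x i) ^ 2)) •
      (ContinuousLinearMap.proj i : (Fin m → ℝ) →L[ℝ] ℝ))‖ ≤ 1 := by
  refine ContinuousLinearMap.opNorm_le_bound _ zero_le_one fun v => ?_
  rw [one_mul]
  rw [pi_norm_le_iff_of_nonneg (norm_nonneg v)]
  intro i
  simp only [ContinuousLinearMap.pi_apply, ContinuousLinearMap.smul_apply,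
    ContinuousLinearMap.proj_apply, smul_eq_mul, Real.norm_eq_abs, abs_mul]
  have h1 : |1 / (1 + (x i) ^ 2)| ≤ 1 := by
    rw [abs_of_nonneg (by positivity), div_le_one (by positivity)]
    nlinarith [sq_nonneg (x i)]
  calc |1 / (1 + (x i) ^ 2)| * |v i| ≤ 1 * |v i| :=
        mul_le_mul_of_nonneg_right h1 (abs_nonneg _)
    _ = ‖v i‖ := by rw [one_mul, Real.norm_eq_abs]
    _ ≤ ‖v‖ := norm_le_pi_norm v i

lemma aux_exists_cyl {E : Type*} [NormedAddCommGroup E] [NormedSpace ℝ E]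
    {Kp Kn : Set E} (hKp : IsCompact Kp) (hKn : IsCompact Kn) (hd : Disjoint Kp Kn) :
    ∃ g ∈ FCb1 E, (∀ z, |g z| ≤ 1) ∧ (∀ z ∈ Kp, g z = 1) ∧ (∀ z ∈ Kn, g z = -1) := by
  rcases Set.eq_empty_or_nonempty Kp with hpe | hpne
  · exact ⟨fun _ => -1, auxFCb1_const _, fun _ => by norm_num, by simp [hpe],
      fun _ _ => rfl⟩
  rcases Set.eq_empty_or_nonempty Kn with hne | hnne
  · exact ⟨fun _ => 1, auxFCb1_const _, fun _ => by norm_num, fun _ _ => rfl, by simp [hne]⟩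
  have hK : IsCompact (Kp ∪ Kn) := hKp.union hKn
  haveI : CompactSpace (Kp ∪ Kn : Set E) := isCompact_iff_compactSpace.1 hK
  -- the Urysohn-type function
  have hden : ∀ z : E, 0 < Metric.infDist z Kp + Metric.infDist z Kn := by
    intro z
    rcases lt_or_eq_of_le
      (add_nonneg Metric.infDist_nonneg Metric.infDist_nonneg :
        (0:ℝ) ≤ Metric.infDist z Kp + Metric.infDist z Kn) with h | h
    · exact h
    · exfalso
      have hp0 := Metric.infDist_nonneg (x := z) (s := Kp)
      have hn0 := Metric.infDist_nonneg (x := z) (s := Kn)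
      have h1 : Metric.infDist z Kp = 0 := by linarith
      have h2 : Metric.infDist z Kn = 0 := by linarith
      exact Set.disjoint_left.1 hd ((hKp.isClosed.mem_iff_infDist_zero hpne).2 h1)
        ((hKn.isClosed.mem_iff_infDist_zero hnne).2 h2)
  set φ₀ : E → ℝ := fun z =>
    (Metric.infDist z Kn - Metric.infDist z Kp) /
      (Metric.infDist z Kp + Metric.infDist z Kn) with hφ₀
  have hφ₀cont : Continuous φ₀ :=
    ((Metric.continuous_infDist_pt Kn).sub (Metric.continuous_infDist_pt Kp)).div
      ((Metric.continuous_infDist_pt Kp).add (Metric.continuous_infDist_pt Kn))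
      fun z => (hden z).ne'
  have hφ₀p : ∀ z ∈ Kp, φ₀ z = 1 := by
    intro z hz
    have h1 : Metric.infDist z Kp = 0 := Metric.infDist_zero_of_mem hz
    have h2 : 0 < Metric.infDist z Kn := by have := hden z; linarith
    show (Metric.infDist z Kn - Metric.infDist z Kp) /
      (Metric.infDist z Kp + Metric.infDist z Kn) = 1
    rw [h1, sub_zero, zero_add, div_self h2.ne']
  have hφ₀n : ∀ z ∈ Kn, φ₀ z = -1 := by
    intro z hz
    have h1 : Metric.infDist z Kn = 0 := Metric.infDist_zero_of_mem hz
    have h2 : 0 < Metric.infDist z Kp := by have := hden z; linarith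
    show (Metric.infDist z Kn - Metric.infDist z Kp) /
      (Metric.infDist z Kp + Metric.infDist z Kn) = -1
    rw [h1, zero_sub, add_zero, neg_div, div_self h2.ne']
  set φ : C((Kp ∪ Kn : Set E), ℝ) :=
    ⟨fun z => φ₀ z, hφ₀cont.comp continuous_subtype_val⟩ with hφ
  set G : Set C((Kp ∪ Kn : Set E), ℝ) :=
    {f | ∃ l : E →L[ℝ] ℝ, ∀ z : (Kp ∪ Kn : Set E), f z = Real.arctan (l z)} with hG
  have hsep : (Algebra.adjoin ℝ G).SeparatesPoints := by
    intro x y hxy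
    obtain ⟨l, hl⟩ := SeparatingDual.exists_separating_of_ne (R := ℝ)
      (fun h : (x : E) = y => hxy (Subtype.ext h))
    refine ⟨fun z : (Kp ∪ Kn : Set E) => Real.arctan (l z), ⟨⟨_,
      Real.continuous_arctan.comp (l.continuous.comp continuous_subtype_val)⟩,
      Algebra.subset_adjoin ⟨l, fun _ => rfl⟩, rfl⟩, ?_⟩
    exact fun h => hl (Real.arctan_injective h)
  obtain ⟨u, hu⟩ := ContinuousMap.exists_mem_subalgebra_near_continuousMap_of_separatesPoints
    (Algebra.adjoin ℝ G) hsep φ 2⁻¹ (by norm_num)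
  have hrep : ∀ v : C((Kp ∪ Kn : Set E), ℝ), v ∈ Algebra.adjoin ℝ G →
      ∃ (m : ℕ) (l : Fin m → E →L[ℝ] ℝ) (q : (Fin m → ℝ) → ℝ),
        ContDiff ℝ 1 q ∧ ∀ z : (Kp ∪ Kn : Set E),
          v z = q (fun i => Real.arctan (l i z)) := by
    intro v hv
    induction hv using Algebra.adjoin_induction with
    | mem f hf =>
      obtain ⟨l, hl⟩ := hf
      exact ⟨1, fun _ => l, fun x => x 0,
        (ContinuousLinearMap.proj (R := ℝ) (φ := fun _ : Fin 1 => ℝ) 0).contDiff,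
        fun z => hl z⟩
    | algebraMap r =>
      exact ⟨0, fun i => 0, fun _ => r, contDiff_const, fun z => by
        simp [Algebra.algebraMap_eq_smul_one]⟩
    | add x y hx hy ihx ihy =>
      obtain ⟨m₁, l₁, q₁, hq₁, h₁⟩ := ihx
      obtain ⟨m₂, l₂, q₂, hq₂, h₂⟩ := ihy
      have hc1 : ContDiff ℝ 1 fun x : Fin (m₁ + m₂) → ℝ =>
          q₁ (fun i => x (Fin.castAdd m₂ i)) :=
        hq₁.comp (contDiff_pi.2 fun i => (ContinuousLinearMap.proj
          (R := ℝ) (φ := fun _ : Fin (m₁ + m₂) => ℝ) (Fin.castAdd m₂ i)).contDiff)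
      have hc2 : ContDiff ℝ 1 fun x : Fin (m₁ + m₂) → ℝ =>
          q₂ (fun i => x (Fin.natAdd m₁ i)) :=
        hq₂.comp (contDiff_pi.2 fun i => (ContinuousLinearMap.proj
          (R := ℝ) (φ := fun _ : Fin (m₁ + m₂) => ℝ) (Fin.natAdd m₁ i)).contDiff)
      refine ⟨m₁ + m₂, Fin.append l₁ l₂,
        fun x => q₁ (fun i => x (Fin.castAdd m₂ i)) + q₂ (fun i => x (Fin.natAdd m₁ i)),
        hc1.add hc2, fun z => ?_⟩
      show x z + y z = _
      rw [h₁ z, h₂ z]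
      simp only [Fin.append_left, Fin.append_right]
    | mul x y hx hy ihx ihy =>
      obtain ⟨m₁, l₁, q₁, hq₁, h₁⟩ := ihx
      obtain ⟨m₂, l₂, q₂, hq₂, h₂⟩ := ihy
      have hc1 : ContDiff ℝ 1 fun x : Fin (m₁ + m₂) → ℝ =>
          q₁ (fun i => x (Fin.castAdd m₂ i)) :=
        hq₁.comp (contDiff_pi.2 fun i => (ContinuousLinearMap.proj
          (R := ℝ) (φ := fun _ : Fin (m₁ + m₂) => ℝ) (Fin.castAdd m₂ i)).contDiff)
      have hc2 : ContDiff ℝ 1 fun x : Fin (m₁ + m₂) → ℝ =>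
          q₂ (fun i => x (Fin.natAdd m₁ i)) :=
        hq₂.comp (contDiff_pi.2 fun i => (ContinuousLinearMap.proj
          (R := ℝ) (φ := fun _ : Fin (m₁ + m₂) => ℝ) (Fin.natAdd m₁ i)).contDiff)
      refine ⟨m₁ + m₂, Fin.append l₁ l₂,
        fun x => q₁ (fun i => x (Fin.castAdd m₂ i)) * q₂ (fun i => x (Fin.natAdd m₁ i)),
        hc1.mul hc2, fun z => ?_⟩
      show x z * y z = _
      rw [h₁ z, h₂ z]
      simp only [Fin.append_left, Fin.append_right]
  obtain ⟨m, l, q, hq, hval⟩ := hrep u u.2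
  have hu' : ∀ z : (Kp ∪ Kn : Set E), |(u : C((Kp ∪ Kn : Set E), ℝ)) z - φ z| < 2⁻¹ := by
    intro z
    calc |(u : C((Kp ∪ Kn : Set E), ℝ)) z - φ z|
        = ‖((u : C((Kp ∪ Kn : Set E), ℝ)) - φ) z‖ := by
          rw [ContinuousMap.sub_apply, Real.norm_eq_abs]
      _ ≤ ‖(u : C((Kp ∪ Kn : Set E), ℝ)) - φ‖ := ContinuousMap.norm_coe_le_norm _ z
      _ < 2⁻¹ := hu
  -- bounds for the derivative
  obtain ⟨Cd, hCd0, hCd⟩ := aux_deriv_st_bound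
  have hqc : Continuous (fderiv ℝ q) := hq.continuous_fderiv one_ne_zero
  obtain ⟨Cq, hCq⟩ := (isCompact_Icc (a := fun _ : Fin m => (-2:ℝ))
    (b := fun _ => 2)).exists_bound_of_continuousOn hqc.continuousOn
  have hAmem : ∀ x : Fin m → ℝ, (fun i => Real.arctan (x i)) ∈
      Set.Icc (fun _ : Fin m => (-2:ℝ)) (fun _ => 2) := by
    intro x
    have hpi : Real.pi / 2 ≤ 2 := by linarith [Real.pi_le_four]
    constructor <;> intro i
    · have := Real.neg_pi_div_two_lt_arctan (x i); dsimp; linarith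
    · have := Real.arctan_lt_pi_div_two (x i); dsimp; linarith
  set f : (Fin m → ℝ) → ℝ := fun x => auxChi (q (fun i => Real.arctan (x i))) with hf
  have hfder : ∀ x, ‖fderiv ℝ f x‖ ≤ 2 * Cd * (max Cq 0 * 1) := by
    intro x
    have h1 : HasFDerivAt (fun y : Fin m → ℝ => q (fun i => Real.arctan (y i)))
        ((fderiv ℝ q (fun i => Real.arctan (x i))).comp
          (ContinuousLinearMap.pi fun i => (1 / (1 + (x i) ^ 2)) •
            ContinuousLinearMap.proj i)) x :=
      ((hq.differentiable one_ne_zero) _).hasFDerivAt.comp x (aux_arctan_pi x)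
    have hst : HasDerivAt Real.smoothTransition
        (deriv Real.smoothTransition (q (fun i => Real.arctan (x i)) + 2⁻¹))
        (q (fun i => Real.arctan (x i)) + 2⁻¹) :=
      (((Real.smoothTransition.contDiff (n := 1)).differentiable one_ne_zero) _).hasDerivAt
    have hchi : HasDerivAt auxChi
        (2 * deriv Real.smoothTransition (q (fun i => Real.arctan (x i)) + 2⁻¹))
        (q (fun i => Real.arctan (x i))) := by
      have h2 : HasDerivAt (fun t : ℝ => t + 2⁻¹) 1 (q (fun i => Real.arctan (x i))) :=
        (hasDerivAt_id _).add_const _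
      have h3 := (hst.comp (q fun i => Real.arctan (x i)) h2).const_mul (2:ℝ)
      have h4 := h3.sub_const 1; simp only [mul_one] at h4; exact h4
    have hft : HasFDerivAt f
        ((2 * deriv Real.smoothTransition ((q fun i => Real.arctan (x i)) + 2⁻¹)) •
          (fderiv ℝ q fun i => Real.arctan (x i)).comp
            (ContinuousLinearMap.pi fun i => (1 / (1 + x i ^ 2)) •
              (ContinuousLinearMap.proj i : (Fin m → ℝ) →L[ℝ] ℝ))) x :=
      hchi.comp_hasFDerivAt (f := fun y : Fin m → ℝ => q (fun i => Real.arctan (y i))) x h1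
    rw [hft.fderiv, norm_smul]
    have e1 : ‖(2 : ℝ) * deriv Real.smoothTransition
        (q (fun i => Real.arctan (x i)) + 2⁻¹)‖ ≤ 2 * Cd := by
      rw [Real.norm_eq_abs, abs_mul, abs_two]
      exact mul_le_mul_of_nonneg_left (hCd _) (by norm_num)
    have e2 : ‖(fderiv ℝ q (fun i => Real.arctan (x i))).comp
        (ContinuousLinearMap.pi fun i => (1 / (1 + (x i) ^ 2)) •
          (ContinuousLinearMap.proj i : (Fin m → ℝ) →L[ℝ] ℝ))‖ ≤ max Cq 0 * 1 := by
      refine le_trans (ContinuousLinearMap.opNorm_comp_le _ _) ?_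
      exact mul_le_mul (le_trans (hCq _ (hAmem x)) (le_max_left _ _))
        (aux_arctan_pi_norm x) (norm_nonneg _) (le_max_right _ _)
    exact mul_le_mul e1 e2 (norm_nonneg _) (by positivity)
  -- conclusion
  refine ⟨fun z => f (fun i => l i z), ⟨m, l, f,
    auxChi_contDiff.comp (hq.comp (contDiff_pi.2 fun i =>
      Real.contDiff_arctan.comp ((ContinuousLinearMap.proj (R := ℝ) (φ := fun _ : Fin m => ℝ) i).contDiff))),
    ⟨1, fun x => auxChi_abs_le _⟩, ⟨2 * Cd * (max Cq 0 * 1), hfder⟩, fun z => rfl⟩,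
    fun z => auxChi_abs_le _, ?_, ?_⟩
  · intro z hz
    have hzK : z ∈ Kp ∪ Kn := Or.inl hz
    have h1 : (u : C((Kp ∪ Kn : Set E), ℝ)) ⟨z, hzK⟩ =
        q (fun i => Real.arctan (l i z)) := hval ⟨z, hzK⟩
    have h2 := hu' ⟨z, hzK⟩
    have h3 : φ ⟨z, hzK⟩ = 1 := hφ₀p z hz
    rw [h3, h1] at h2
    show auxChi (q (fun i => Real.arctan (l i z))) = 1
    apply auxChi_eq_one
    have := abs_lt.1 h2
    linarith [this.1]
  · intro z hz
    have hzK : z ∈ Kp ∪ Kn := Or.inr hz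
    have h1 : (u : C((Kp ∪ Kn : Set E), ℝ)) ⟨z, hzK⟩ =
        q (fun i => Real.arctan (l i z)) := hval ⟨z, hzK⟩
    have h2 := hu' ⟨z, hzK⟩
    have h3 : φ ⟨z, hzK⟩ = -1 := hφ₀n z hz
    rw [h3, h1] at h2
    show auxChi (q (fun i => Real.arctan (l i z))) = -1
    apply auxChi_eq_neg_one
    have := abs_lt.1 h2
    linarith [this.2]

lemma auxFCb1_integrable {E : Type*} [NormedAddCommGroup E] [NormedSpace ℝ E]
    [MeasurableSpace E] [OpensMeasurableSpace E] {g : E → ℝ} (hg : g ∈ FCb1 E)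
    (μ : Measure E) [IsFiniteMeasure μ] : Integrable g μ := by
  obtain ⟨m, l, f, hf, ⟨C, hC⟩, -, hrep⟩ := hg
  have hgc : Continuous g := by
    have : g = fun z => f (fun i => l i z) := funext hrep
    rw [this]
    exact hf.continuous.comp (continuous_pi fun i => (l i).continuous)
  refine ⟨hgc.aestronglyMeasurable, ?_⟩
  apply MeasureTheory.HasFiniteIntegral.of_bounded (C := C)
  exact ae_of_all _ fun z => by rw [Real.norm_eq_abs, hrep z]; exact hC _


/-- for a finite signed Borel measure `ζ` on a real separable Banach
space `E`, `|ζ|(E) = sup { ∫ g dζ : g ∈ 𝓕C_b¹, ‖g‖_∞ ≤ 1 }`. -/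
theorem stmt16 {E : Type*} [NormedAddCommGroup E] [NormedSpace ℝ E] [CompleteSpace E]
    [SecondCountableTopology E] [MeasurableSpace E] [BorelSpace E]
    (ζ : SignedMeasure E) :
    (ζ.totalVariation Set.univ).toReal =
      sSup {r | ∃ g ∈ FCb1 E, (∀ z, |g z| ≤ 1) ∧ r = sintegral ζ g} := by
  haveI : Nonempty E := ⟨0⟩
  set p := ζ.toJordanDecomposition.posPart with hp
  set n := ζ.toJordanDecomposition.negPart with hn
  haveI := ζ.toJordanDecomposition.posPart_finite
  haveI := ζ.toJordanDecomposition.negPart_finite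
  set S := {r | ∃ g ∈ FCb1 E, (∀ z, |g z| ≤ 1) ∧ r = sintegral ζ g} with hS
  set T : ℝ := (p Set.univ).toReal + (n Set.univ).toReal with hT
  have hsint : ∀ g : E → ℝ, sintegral ζ g = (∫ z, g z ∂p) - ∫ z, g z ∂n := fun g => rfl
  have hLHS : (ζ.totalVariation Set.univ).toReal = T := by
    rw [SignedMeasure.totalVariation, Measure.add_apply,
      ENNReal.toReal_add (measure_ne_top _ _) (measure_ne_top _ _)]
  have hne : S.Nonempty := ⟨sintegral ζ (fun _ => 0),
    ⟨fun _ => 0, auxFCb1_const 0, fun _ => by norm_num, rfl⟩⟩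
  have hbound : ∀ r ∈ S, r ≤ T := by
    rintro r ⟨g, hg, h1, rfl⟩
    have hip := auxFCb1_integrable hg p
    have hin := auxFCb1_integrable hg n
    have h2 : ∫ z, g z ∂p ≤ ∫ _z, (1:ℝ) ∂p :=
      integral_mono hip (integrable_const 1) (fun z => (abs_le.1 (h1 z)).2)
    have h3 : ∫ _z, (-1:ℝ) ∂n ≤ ∫ z, g z ∂n :=
      integral_mono (integrable_const _) hin (fun z => (abs_le.1 (h1 z)).1)
    rw [integral_const] at h2
    rw [integral_const] at h3
    simp only [smul_eq_mul, mul_one, mul_neg, measureReal_def] at h2 h3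
    rw [hsint g]
    linarith
  have hbdd : BddAbove S := ⟨T, hbound⟩
  have hlow : ∀ ε : ℝ, 0 < ε → T - ε ≤ sSup S := by
    intro ε hε
    obtain ⟨s, hsm, hps, hns⟩ := ζ.toJordanDecomposition.mutuallySingular
    set μ : Measure E := p + n with hμ
    have hμle : ∀ X : Set E, p X ≤ μ X := fun X => by
      rw [hμ, Measure.add_apply]; exact le_self_add
    have hμle' : ∀ X : Set E, n X ≤ μ X := fun X => by
      rw [hμ, Measure.add_apply]; exact le_add_self
    set A := sᶜ with hA
    have hAm : MeasurableSet A := hsm.compl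
    have hpA : p Aᶜ = 0 := by rw [hA, compl_compl]; exact hps
    have hnA : n A = 0 := hns
    set δ : ℝ≥0∞ := ENNReal.ofReal (ε / 8) with hδ
    have hδ0 : δ ≠ 0 := by
      rw [hδ, Ne, ENNReal.ofReal_eq_zero, not_le]; linarith
    obtain ⟨F1, hF1A, hF1c, hF1⟩ := hAm.exists_isClosed_diff_lt (measure_ne_top μ A) hδ0
    obtain ⟨F2, hF2A, hF2c, hF2⟩ := hAm.compl.exists_isClosed_diff_lt
      (measure_ne_top μ Aᶜ) hδ0
    obtain ⟨K, hKc, hKμ⟩ := aux_tight μ hδ0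
    have hKpc : IsCompact (F1 ∩ K) := hKc.inter_left hF1c
    have hKnc : IsCompact (F2 ∩ K) := hKc.inter_left hF2c
    have hdisj : Disjoint (F1 ∩ K) (F2 ∩ K) :=
      Set.disjoint_left.2 fun z hzp hzn => (hF2A hzn.1) (hF1A hzp.1)
    obtain ⟨g, hgF, habs, hg1, hgm1⟩ := aux_exists_cyl hKpc hKnc hdisj
    -- measure bounds
    have hδ4 : (2:ℝ≥0∞) * δ = ENNReal.ofReal (ε / 4) := by
      rw [hδ, ← ENNReal.ofReal_ofNat 2, ← ENNReal.ofReal_mul (by norm_num)]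
      congr 1
      ring
    have hpKp : p (F1 ∩ K)ᶜ ≤ ENNReal.ofReal (ε / 4) := by
      rw [← hδ4, two_mul]
      rw [Set.compl_inter]
      refine le_trans (measure_union_le _ _) (add_le_add ?_ ?_)
      · have hsub : F1ᶜ ⊆ (A \ F1) ∪ Aᶜ := fun z hz => by
          by_cases hzA : z ∈ A
          · exact Or.inl ⟨hzA, hz⟩
          · exact Or.inr hzA
        calc p F1ᶜ ≤ p ((A \ F1) ∪ Aᶜ) := measure_mono hsub
          _ ≤ p (A \ F1) + p Aᶜ := measure_union_le _ _
          _ = p (A \ F1) := by rw [hpA, add_zero]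
          _ ≤ μ (A \ F1) := hμle _
          _ ≤ δ := hF1.le
      · exact le_trans (hμle _) hKμ.le
    have hnKn : n (F2 ∩ K)ᶜ ≤ ENNReal.ofReal (ε / 4) := by
      rw [← hδ4, two_mul]
      rw [Set.compl_inter]
      refine le_trans (measure_union_le _ _) (add_le_add ?_ ?_)
      · have hsub : F2ᶜ ⊆ (Aᶜ \ F2) ∪ A := fun z hz => by
          by_cases hzA : z ∈ Aᶜ
          · exact Or.inl ⟨hzA, hz⟩
          · exact Or.inr (by simpa using hzA)
        calc n F2ᶜ ≤ n ((Aᶜ \ F2) ∪ A) := measure_mono hsub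
          _ ≤ n (Aᶜ \ F2) + n A := measure_union_le _ _
          _ = n (Aᶜ \ F2) := by rw [hnA, add_zero]
          _ ≤ μ (Aᶜ \ F2) := hμle' _
          _ ≤ δ := hF2.le
      · exact le_trans (hμle' _) hKμ.le
    have hpKpr : (p (F1 ∩ K)ᶜ).toReal ≤ ε / 4 :=
      ENNReal.toReal_le_of_le_ofReal (by positivity) hpKp
    have hnKnr : (n (F2 ∩ K)ᶜ).toReal ≤ ε / 4 :=
      ENNReal.toReal_le_of_le_ofReal (by positivity) hnKn
    -- integral bounds
    have hgint_p := auxFCb1_integrable hgF p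
    have hgint_n := auxFCb1_integrable hgF n
    have hKpm : MeasurableSet (F1 ∩ K)ᶜ := (hKpc.isClosed.measurableSet).compl
    have hKnm : MeasurableSet (F2 ∩ K)ᶜ := (hKnc.isClosed.measurableSet).compl
    have e1 : ∫ z, (1 - g z) ∂p ≤ 2 * (p (F1 ∩ K)ᶜ).toReal := by
      have hmono : ∀ z, 1 - g z ≤ Set.indicator (F1 ∩ K)ᶜ (fun _ => (2:ℝ)) z := by
        intro z
        by_cases hz : z ∈ F1 ∩ K
        · rw [hg1 z hz, Set.indicator_of_notMem (by simpa using hz)]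
          norm_num
        · rw [Set.indicator_of_mem (by simpa using hz)]
          have := abs_le.1 (habs z); linarith [this.1]
      calc ∫ z, (1 - g z) ∂p
          ≤ ∫ z, Set.indicator (F1 ∩ K)ᶜ (fun _ => (2:ℝ)) z ∂p :=
            integral_mono ((integrable_const 1).sub hgint_p)
              ((integrable_const 2).indicator hKpm) hmono
        _ = 2 * (p (F1 ∩ K)ᶜ).toReal := by
            rw [integral_indicator_const _ hKpm, smul_eq_mul, mul_comm, measureReal_def]
    have e2 : ∫ z, (1 + g z) ∂n ≤ 2 * (n (F2 ∩ K)ᶜ).toReal := by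
      have hmono : ∀ z, 1 + g z ≤ Set.indicator (F2 ∩ K)ᶜ (fun _ => (2:ℝ)) z := by
        intro z
        by_cases hz : z ∈ F2 ∩ K
        · rw [hgm1 z hz, Set.indicator_of_notMem (by simpa using hz)]
          norm_num
        · rw [Set.indicator_of_mem (by simpa using hz)]
          have := abs_le.1 (habs z); linarith [this.2]
      calc ∫ z, (1 + g z) ∂n
          ≤ ∫ z, Set.indicator (F2 ∩ K)ᶜ (fun _ => (2:ℝ)) z ∂n :=
            integral_mono ((integrable_const 1).add hgint_n)
              ((integrable_const 2).indicator hKnm) hmono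
        _ = 2 * (n (F2 ∩ K)ᶜ).toReal := by
            rw [integral_indicator_const _ hKnm, smul_eq_mul, mul_comm, measureReal_def]
    rw [integral_sub (integrable_const 1) hgint_p, integral_const] at e1
    rw [integral_add (integrable_const 1) hgint_n, integral_const] at e2
    simp only [smul_eq_mul, mul_one, measureReal_def] at e1 e2
    have hrS : sintegral ζ g ∈ S := ⟨g, hgF, habs, rfl⟩
    have hrle : sintegral ζ g ≤ sSup S := le_csSup hbdd hrS
    rw [hsint g] at hrle
    linarith
  rw [hLHS]
  refine le_antisymm ?_ (csSup_le hne hbound)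
  refine le_of_forall_pos_le_add fun ε hε => ?_
  linarith [hlow ε hε]

end
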